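/- arXiv:2509.22549 — 7 statements merged into one kernel-verified Lean document; each statement's English description precedes it below -/
import Mathlib

section
/- Let (X,μ_X) and (Y,μ_Y) be Polish probability spaces, X' and Y' Polish spaces, and f:X→X', g:Y→Y' Borel measurable maps. Then the set of couplings of the pushforward measures f_#μ_X and g_#μ_Y equals the set of pushforwards (f×g)_#π where π ranges over couplings of μ_X and μ_Y. -/
open MeasureTheory ProbabilityTheory

/-- A probability measure giving full mass to a fiber of `f` pushes forward to a Dirac. -/
lemma map_eq_dirac_of_fiber {Z Z' : Type*} [MeasurableSpace Z] [MeasurableSpace Z']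
    [MeasurableSingletonClass Z']
    (ν : Measure Z) [IsProbabilityMeasure ν] {f : Z → Z'} (hf : Measurable f) {a : Z'}
    (hGa : MeasurableSet {z | f z = a})
    (h : ν {z | f z = a} = 1) : ν.map f = Measure.dirac a := by
  ext s hs
  rw [Measure.map_apply hf hs, Measure.dirac_apply' _ hs]
  by_cases ha : a ∈ s
  · have h1 : ν {z | f z = a} ≤ ν (f ⁻¹' s) := measure_mono (fun z hz => by
      simp only [Set.mem_setOf_eq] at hz; simp [Set.mem_preimage, hz, ha])
    rw [h] at h1
    have h2 : ν (f ⁻¹' s) ≤ 1 := prob_le_one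
    simp [le_antisymm h2 h1, Set.indicator_of_mem ha]
  · have h0 : ν {z | f z ≠ a} = 0 := by
      have := prob_compl_eq_zero_iff (μ := ν) (s := {z | f z = a})
        (hf (MeasurableSet.singleton a))
      rw [← this.mpr h]
      rfl
    have : ν (f ⁻¹' s) ≤ ν {z | f z ≠ a} := measure_mono (fun z hz => by
      simp only [Set.mem_preimage] at hz
      simp only [Set.mem_setOf_eq]
      intro hfz; exact ha (hfz ▸ hz))
    simp [le_antisymm (this.trans h0.le) zero_le, Set.indicator_of_notMem ha]

/-- The conditional kernel of `μ.map (fun z => (f z, z))` is a.e. concentrated on fibers. -/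
lemma condKernel_fiber {Z Z' : Type*}
    [MeasurableSpace Z] [TopologicalSpace Z] [PolishSpace Z] [BorelSpace Z]
    [MeasurableSpace Z'] [TopologicalSpace Z'] [PolishSpace Z'] [BorelSpace Z']
    [Nonempty Z]
    (μ : Measure Z) [IsProbabilityMeasure μ] {f : Z → Z'} (hf : Measurable f) :
    ∀ᵐ a ∂(μ.map f),
      (μ.map (fun z => (f z, z))).condKernel a {z | f z = a} = 1 := by
  set ρ : Measure (Z' × Z) := μ.map (fun z => (f z, z)) with hρ
  have hmap : Measurable (fun z => (f z, z)) := hf.prodMk measurable_id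
  have hρ_prob : IsProbabilityMeasure ρ := Measure.isProbabilityMeasure_map hmap.aemeasurable
  have hfst : ρ.fst = μ.map f := by
    rw [Measure.fst, hρ, Measure.map_map measurable_fst hmap]
    rfl
  -- the graph set
  have hG : MeasurableSet {p : Z' × Z | f p.2 = p.1} :=
    StronglyMeasurable.measurableSet_eq_fun
      (hf.comp measurable_snd).stronglyMeasurable measurable_fst.stronglyMeasurable
  have hρG : ρ {p : Z' × Z | f p.2 = p.1} = 1 := by
    rw [hρ, Measure.map_apply hmap hG]
    simp
  -- disintegrate
  have hcomp := ρ.disintegrate ρ.condKernel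
  rw [← hcomp, Measure.compProd_apply hG] at hρG
  have hmeas : Measurable fun a => ρ.condKernel a (Prod.mk a ⁻¹' {p : Z' × Z | f p.2 = p.1}) :=
    Kernel.measurable_kernel_prodMk_left (κ := ρ.condKernel) hG
  -- a.e. equality to 1 from integral = total mass
  have h_le : ∀ a, ρ.condKernel a (Prod.mk a ⁻¹' {p : Z' × Z | f p.2 = p.1}) ≤ 1 :=
    fun a => prob_le_one
  have h_int_one : ∫⁻ a, 1 ∂ρ.fst = 1 := by
    have : IsProbabilityMeasure (μ.map f) := Measure.isProbabilityMeasure_map hf.aemeasurable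
    simp [hfst]
  have h_ae : ∀ᵐ a ∂ρ.fst,
      ρ.condKernel a (Prod.mk a ⁻¹' {p : Z' × Z | f p.2 = p.1}) = 1 := by
    have hsub : ∫⁻ a, (1 - ρ.condKernel a (Prod.mk a ⁻¹' {p : Z' × Z | f p.2 = p.1})) ∂ρ.fst
        = 0 := by
      rw [lintegral_sub hmeas (by rw [hρG]; exact ENNReal.one_ne_top)
        (Filter.Eventually.of_forall h_le), hρG, h_int_one, tsub_self]
    have := (lintegral_eq_zero_iff (Measurable.const_sub hmeas 1)).mp hsub
    filter_upwards [this] with a ha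
    have hle := h_le a
    simp only [Pi.zero_apply] at ha
    have := tsub_eq_zero_iff_le.mp ha
    exact le_antisymm hle this
  rw [hfst] at h_ae
  filter_upwards [h_ae] with a ha
  exact ha

/-- Couplings of pushforward measures are exactly pushforwards of couplings. -/
theorem couplings_of_pushforwards {X Y X' Y' : Type*}
    [MeasurableSpace X] [TopologicalSpace X] [PolishSpace X] [BorelSpace X]
    [MeasurableSpace Y] [TopologicalSpace Y] [PolishSpace Y] [BorelSpace Y]
    [MeasurableSpace X'] [TopologicalSpace X'] [PolishSpace X'] [BorelSpace X']
    [MeasurableSpace Y'] [TopologicalSpace Y'] [PolishSpace Y'] [BorelSpace Y']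
    (μX : Measure X) (μY : Measure Y) [IsProbabilityMeasure μX] [IsProbabilityMeasure μY]
    (f : X → X') (g : Y → Y') (hf : Measurable f) (hg : Measurable g) :
    {π' : Measure (X' × Y') | π'.map Prod.fst = μX.map f ∧ π'.map Prod.snd = μY.map g}
      = (fun π : Measure (X × Y) => π.map (Prod.map f g)) ''
        {π : Measure (X × Y) | π.map Prod.fst = μX ∧ π.map Prod.snd = μY} := by
  have : Nonempty X := μX.nonempty_of_neZero
  have : Nonempty Y := μY.nonempty_of_neZero
  have hfg : Measurable (Prod.map f g) := hf.prodMap hg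
  ext π'
  simp only [Set.mem_setOf_eq, Set.mem_image]
  constructor
  · rintro ⟨h1, h2⟩
    have hπ'_prob : IsProbabilityMeasure π' := by
      constructor
      have : π' Set.univ = (π'.map Prod.fst) Set.univ := by
        rw [Measure.map_apply measurable_fst MeasurableSet.univ]; rfl
      rw [this, h1, Measure.map_apply hf MeasurableSet.univ]
      simp
    -- conditional kernels
    set ρX : Measure (X' × X) := μX.map (fun x => (f x, x)) with hρX
    set ρY : Measure (Y' × Y) := μY.map (fun y => (g y, y)) with hρY
    have hmapX : Measurable (fun x => (f x, x)) := hf.prodMk measurable_id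
    have hmapY : Measurable (fun y => (g y, y)) := hg.prodMk measurable_id
    have hρX_prob : IsProbabilityMeasure ρX := Measure.isProbabilityMeasure_map hmapX.aemeasurable
    have hρY_prob : IsProbabilityMeasure ρY := Measure.isProbabilityMeasure_map hmapY.aemeasurable
    set κX := ρX.condKernel with hκX
    set κY := ρY.condKernel with hκY
    have hfstX : ρX.fst = μX.map f := by
      rw [Measure.fst, hρX, Measure.map_map measurable_fst hmapX]; rfl
    have hfstY : ρY.fst = μY.map g := by
      rw [Measure.fst, hρY, Measure.map_map measurable_fst hmapY]; rfl
    have hsndX : ρX.snd = μX := by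
      rw [Measure.snd, hρX, Measure.map_map measurable_snd hmapX]
      simp [Function.comp_def]
    have hsndY : ρY.snd = μY := by
      rw [Measure.snd, hρY, Measure.map_map measurable_snd hmapY]
      simp [Function.comp_def]
    -- the joint kernel
    set K : Kernel (X' × Y') (X × Y) :=
      Kernel.prod (κX.comap Prod.fst measurable_fst) (κY.comap Prod.snd measurable_snd) with hK
    have hK_apply : ∀ p : X' × Y', K p = (κX p.1).prod (κY p.2) := by
      intro p
      rw [hK, Kernel.prod_apply]
      rfl
    have hK_meas : Measurable (fun p : X' × Y' => K p) := K.measurable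
    -- the coupling
    refine ⟨π'.bind (fun p => K p), ⟨?_, ?_⟩, ?_⟩
    · -- fst marginal
      ext s hs
      rw [Measure.map_apply measurable_fst hs,
        Measure.bind_apply (measurable_fst hs) hK_meas.aemeasurable]
      have : ∀ p : X' × Y', K p (Prod.fst ⁻¹' s) = κX p.1 s := by
        intro p
        rw [hK_apply]
        have : Prod.fst ⁻¹' s = s ×ˢ (Set.univ : Set Y) := by ext z; simp
        rw [this, Measure.prod_prod]
        simp
      simp_rw [this]
      have hmeasκ : Measurable fun a => κX a s := κX.measurable_coe hs
      rw [← lintegral_map hmeasκ measurable_fst, h1, ← hfstX]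
      have := Measure.compProd_apply (μ := ρX.fst) (κ := κX)
        (MeasurableSet.univ.prod hs)
      rw [ρX.disintegrate ρX.condKernel] at this
      rw [← hsndX, Measure.snd_apply hs]
      rw [show (Set.univ : Set X') ×ˢ s = Prod.snd ⁻¹' s by ext z; simp] at this
      rw [this]
      congr 1
    · -- snd marginal
      ext s hs
      rw [Measure.map_apply measurable_snd hs,
        Measure.bind_apply (measurable_snd hs) hK_meas.aemeasurable]
      have : ∀ p : X' × Y', K p (Prod.snd ⁻¹' s) = κY p.2 s := by
        intro p
        rw [hK_apply]
        have : Prod.snd ⁻¹' s = (Set.univ : Set X) ×ˢ s := by ext z; simp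
        rw [this, Measure.prod_prod]
        simp
      simp_rw [this]
      have hmeasκ : Measurable fun a => κY a s := κY.measurable_coe hs
      rw [← lintegral_map hmeasκ measurable_snd, h2, ← hfstY]
      have := Measure.compProd_apply (μ := ρY.fst) (κ := κY)
        (MeasurableSet.univ.prod hs)
      rw [ρY.disintegrate ρY.condKernel] at this
      rw [← hsndY, Measure.snd_apply hs]
      rw [show (Set.univ : Set Y') ×ˢ s = Prod.snd ⁻¹' s by ext z; simp] at this
      rw [this]
      congr 1
    · -- pushforward of the coupling is π'
      have haeX : ∀ᵐ p ∂π', κX p.1 {x | f x = p.1} = 1 := by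
        have := condKernel_fiber μX hf
        rw [← h1] at this
        exact ae_of_ae_map measurable_fst.aemeasurable this
      have haeY : ∀ᵐ p ∂π', κY p.2 {y | g y = p.2} = 1 := by
        have := condKernel_fiber μY hg
        rw [← h2] at this
        exact ae_of_ae_map measurable_snd.aemeasurable this
      ext s hs
      rw [Measure.map_apply hfg hs,
        Measure.bind_apply (hfg hs) hK_meas.aemeasurable]
      have h_ae : ∀ᵐ p ∂π', K p (Prod.map f g ⁻¹' s) = s.indicator 1 p := by
        filter_upwards [haeX, haeY] with p hpX hpY
        rw [hK_apply]
        have hdX : (κX p.1).map f = Measure.dirac p.1 :=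
          map_eq_dirac_of_fiber (κX p.1) hf (hf (measurableSet_singleton p.1)) hpX
        have hdY : (κY p.2).map g = Measure.dirac p.2 :=
          map_eq_dirac_of_fiber (κY p.2) hg (hg (measurableSet_singleton p.2)) hpY
        have : ((κX p.1).prod (κY p.2)) (Prod.map f g ⁻¹' s)
            = (((κX p.1).prod (κY p.2)).map (Prod.map f g)) s := by
          rw [Measure.map_apply hfg hs]
        rw [this, ← Measure.map_prod_map _ _ hf hg, hdX, hdY, Measure.dirac_prod_dirac,
          Measure.dirac_apply' _ hs]
      rw [lintegral_congr_ae h_ae, lintegral_indicator_one hs]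
  · rintro ⟨π, ⟨h1, h2⟩, rfl⟩
    constructor
    · rw [Measure.map_map measurable_fst hfg]
      have : Prod.fst ∘ Prod.map f g = f ∘ Prod.fst := rfl
      rw [this, ← Measure.map_map hf measurable_fst, h1]
    · rw [Measure.map_map measurable_snd hfg]
      have : Prod.snd ∘ Prod.map f g = g ∘ Prod.snd := rfl
      rw [this, ← Measure.map_map hg measurable_snd, h2]
end

section
/- Let (X,μ_X), (Y,μ_Y), (Z,μ_Z) be Polish probability spaces with bounded measurable kernels f_X:X×X→ℝ, f_Y:Y×Y→ℝ, f_Z:Z×Z→ℝ. For couplings π_{XY} of (μ_X,μ_Y) and π_{YZ} of (μ_Y,μ_Z), let π_{XY}•π_{YZ} denote the glued coupling of (μ_X,μ_Z). Then for any p∈[1,∞), the p-distortion satisfies the triangle inequality dis_p(π_{XY}•π_{YZ}, f_X, f_Z) ≤ dis_p(π_{XY}, f_X, f_Y) + dis_p(π_{YZ}, f_Y, f_Z). -/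
open MeasureTheory ENNReal

/-- The `p`-distortion of a coupling `π` with respect to kernels `f` and `g`. -/
noncomputable def disP {X Y : Type*} [MeasurableSpace X] [MeasurableSpace Y]
    (p : ℝ) (π : Measure (X × Y)) (f : X → X → ℝ) (g : Y → Y → ℝ) : ℝ≥0∞ :=
  (∫⁻ w, (‖f w.1.1 w.2.1 - g w.1.2 w.2.2‖₊ : ℝ≥0∞) ^ p ∂(π.prod π)) ^ (1 / p)

/-- Triangle inequality for the `p`-distortion along glued couplings: if `π̃` glues the
couplings `πXY` and `πYZ`, then the distortion of its `(X,Z)`-marginal is at most the sum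
of the distortions of `πXY` and `πYZ`. -/
theorem disP_triangle_gluing {X Y Z : Type*}
    [MeasurableSpace X] [TopologicalSpace X] [PolishSpace X] [BorelSpace X]
    [MeasurableSpace Y] [TopologicalSpace Y] [PolishSpace Y] [BorelSpace Y]
    [MeasurableSpace Z] [TopologicalSpace Z] [PolishSpace Z] [BorelSpace Z]
    (μX : Measure X) (μY : Measure Y) (μZ : Measure Z)
    [IsProbabilityMeasure μX] [IsProbabilityMeasure μY] [IsProbabilityMeasure μZ]
    (fX : X → X → ℝ) (fY : Y → Y → ℝ) (fZ : Z → Z → ℝ)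
    (hfX : Measurable (Function.uncurry fX)) (hfY : Measurable (Function.uncurry fY))
    (hfZ : Measurable (Function.uncurry fZ))
    (CX CY CZ : ℝ)
    (hbX : ∀ x x', |fX x x'| ≤ CX) (hbY : ∀ y y', |fY y y'| ≤ CY)
    (hbZ : ∀ z z', |fZ z z'| ≤ CZ)
    (p : ℝ) (hp : 1 ≤ p)
    (πXY : Measure (X × Y)) (πYZ : Measure (Y × Z))
    (hXY1 : πXY.map Prod.fst = μX) (hXY2 : πXY.map Prod.snd = μY)
    (hYZ1 : πYZ.map Prod.fst = μY) (hYZ2 : πYZ.map Prod.snd = μZ)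
    (πt : Measure (X × Y × Z))
    (h1 : πt.map (fun w => (w.1, w.2.1)) = πXY)
    (h2 : πt.map (fun w => w.2) = πYZ) :
    disP p (πt.map (fun w => (w.1, w.2.2))) fX fZ
      ≤ disP p πXY fX fY + disP p πYZ fY fZ := by
  classical
  have hπXY : IsProbabilityMeasure πXY := by
    constructor
    have h' : πXY.map Prod.fst Set.univ = μX Set.univ := by rw [hXY1]
    rw [Measure.map_apply measurable_fst MeasurableSet.univ, Set.preimage_univ] at h'
    rw [h', measure_univ]
  have hmg1 : Measurable (fun w : X × Y × Z => (w.1, w.2.1)) := by fun_prop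
  have hmg2 : Measurable (fun w : X × Y × Z => w.2) := by fun_prop
  have hmg3 : Measurable (fun w : X × Y × Z => (w.1, w.2.2)) := by fun_prop
  have hπt : IsProbabilityMeasure πt := by
    constructor
    have h' : πt.map (fun w => (w.1, w.2.1)) Set.univ = πXY Set.univ := by rw [h1]
    rw [Measure.map_apply hmg1 MeasurableSet.univ, Set.preimage_univ] at h'
    rw [h', measure_univ]
  have hp0 : 0 ≤ p := le_trans zero_le_one hp
  have hp0' : 0 ≤ 1 / p := by positivity
  -- integrand measurability on (X×Y×Z)²
  have m1 : Measurable (fun w : (X × Y × Z) × (X × Y × Z) => fX w.1.1 w.2.1) :=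
    hfX.comp (measurable_fst.fst.prodMk measurable_snd.fst)
  have m2 : Measurable (fun w : (X × Y × Z) × (X × Y × Z) => fY w.1.2.1 w.2.2.1) :=
    hfY.comp (measurable_fst.snd.fst.prodMk measurable_snd.snd.fst)
  have m3 : Measurable (fun w : (X × Y × Z) × (X × Y × Z) => fZ w.1.2.2 w.2.2.2) :=
    hfZ.comp (measurable_fst.snd.snd.prodMk measurable_snd.snd.snd)
  set A : (X × Y × Z) × (X × Y × Z) → ℝ≥0∞ :=
    fun w => (‖fX w.1.1 w.2.1 - fY w.1.2.1 w.2.2.1‖₊ : ℝ≥0∞) with hA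
  set B : (X × Y × Z) × (X × Y × Z) → ℝ≥0∞ :=
    fun w => (‖fY w.1.2.1 w.2.2.1 - fZ w.1.2.2 w.2.2.2‖₊ : ℝ≥0∞) with hB
  have hmA : Measurable A := (m1.sub m2).nnnorm.coe_nnreal_ennreal
  have hmB : Measurable B := (m2.sub m3).nnnorm.coe_nnreal_ennreal
  have hmXZ : Measurable (fun w : (X × Z) × (X × Z) =>
      (‖fX w.1.1 w.2.1 - fZ w.1.2 w.2.2‖₊ : ℝ≥0∞) ^ p) := by
    apply Measurable.pow_const
    apply Measurable.coe_nnreal_ennreal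
    apply Measurable.nnnorm
    exact (hfX.comp (measurable_fst.fst.prodMk measurable_snd.fst)).sub
      (hfZ.comp (measurable_fst.snd.prodMk measurable_snd.snd))
  have hmXY : Measurable (fun w : (X × Y) × (X × Y) =>
      (‖fX w.1.1 w.2.1 - fY w.1.2 w.2.2‖₊ : ℝ≥0∞) ^ p) := by
    apply Measurable.pow_const
    apply Measurable.coe_nnreal_ennreal
    apply Measurable.nnnorm
    exact (hfX.comp (measurable_fst.fst.prodMk measurable_snd.fst)).sub
      (hfY.comp (measurable_fst.snd.prodMk measurable_snd.snd))
  have hmYZ : Measurable (fun w : (Y × Z) × (Y × Z) =>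
      (‖fY w.1.1 w.2.1 - fZ w.1.2 w.2.2‖₊ : ℝ≥0∞) ^ p) := by
    apply Measurable.pow_const
    apply Measurable.coe_nnreal_ennreal
    apply Measurable.nnnorm
    exact (hfY.comp (measurable_fst.fst.prodMk measurable_snd.fst)).sub
      (hfZ.comp (measurable_fst.snd.prodMk measurable_snd.snd))
  -- rewrite the LHS over πt.prod πt
  have hprod3 : (πt.map (fun w => (w.1, w.2.2))).prod (πt.map (fun w => (w.1, w.2.2)))
      = (πt.prod πt).map (Prod.map (fun w => (w.1, w.2.2)) (fun w => (w.1, w.2.2))) :=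
    Measure.map_prod_map _ _ hmg3 hmg3
  have hLHS : disP p (πt.map (fun w => (w.1, w.2.2))) fX fZ
      = (∫⁻ w, (‖fX w.1.1 w.2.1 - fZ w.1.2.2 w.2.2.2‖₊ : ℝ≥0∞) ^ p
          ∂(πt.prod πt)) ^ (1 / p) := by
    rw [disP, hprod3, lintegral_map hmXZ (hmg3.prodMap hmg3)]
    rfl
  rw [hLHS]
  have hpt : ∀ w, (‖fX w.1.1 w.2.1 - fZ w.1.2.2 w.2.2.2‖₊ : ℝ≥0∞) ^ p ≤ (A w + B w) ^ p := by
    intro w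
    apply ENNReal.rpow_le_rpow _ hp0
    rw [hA, hB, ← ENNReal.coe_add, ENNReal.coe_le_coe]
    calc ‖fX w.1.1 w.2.1 - fZ w.1.2.2 w.2.2.2‖₊
        = ‖(fX w.1.1 w.2.1 - fY w.1.2.1 w.2.2.1)
            + (fY w.1.2.1 w.2.2.1 - fZ w.1.2.2 w.2.2.2)‖₊ := by ring_nf
      _ ≤ _ := nnnorm_add_le _ _
  calc (∫⁻ w, (‖fX w.1.1 w.2.1 - fZ w.1.2.2 w.2.2.2‖₊ : ℝ≥0∞) ^ p ∂(πt.prod πt)) ^ (1 / p)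
      ≤ (∫⁻ w, (A w + B w) ^ p ∂(πt.prod πt)) ^ (1 / p) :=
        ENNReal.rpow_le_rpow (lintegral_mono hpt) hp0'
    _ ≤ (∫⁻ w, A w ^ p ∂(πt.prod πt)) ^ (1 / p)
        + (∫⁻ w, B w ^ p ∂(πt.prod πt)) ^ (1 / p) :=
        ENNReal.lintegral_Lp_add_le hmA.aemeasurable hmB.aemeasurable hp
    _ = disP p πXY fX fY + disP p πYZ fY fZ := by
        congr 1
        · rw [disP, ← h1, Measure.map_prod_map _ _ hmg1 hmg1,
            lintegral_map hmXY (hmg1.prodMap hmg1)]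
          rfl
        · rw [disP, ← h2, Measure.map_prod_map _ _ hmg2 hmg2,
            lintegral_map hmYZ (hmg2.prodMap hmg2)]
          rfl
end

section
/- Fix a class 𝔑 of parameterized measure networks with a cost structure C that is symmetric, respects identities, and respects gluing (a symmetric lax homomorphism). Then GW_C(X,Y) := inf over couplings π of (μ_X,μ_Y) of C_{X,Y}(π) defines a pseudometric on 𝔑: it is nonnegative, symmetric, satisfies GW_C(X,X)=0, and satisfies the triangle inequality. -/
open MeasureTheory ProbabilityTheory

lemma aux_compProd_comap_fst {α β γ : Type*} [MeasurableSpace α] [MeasurableSpace β]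
    [MeasurableSpace γ] (ν : Measure (β × γ)) [SFinite ν] (κ : Kernel β α) [IsSFiniteKernel κ] :
    (ν ⊗ₘ (κ.comap Prod.fst measurable_fst)).map (fun p => (p.1.1, p.2)) = ν.fst ⊗ₘ κ := by
  ext s hs
  rw [Measure.map_apply (by fun_prop) hs,
    Measure.compProd_apply (by exact (by fun_prop : Measurable fun p : (β × γ) × α => (p.1.1, p.2)) hs),
    Measure.compProd_apply hs, Measure.fst,
    lintegral_map (Kernel.measurable_kernel_prodMk_left hs) measurable_fst]
  rfl

lemma gluing_exists {α β γ : Type*} [MeasurableSpace α] [MeasurableSpace β] [MeasurableSpace γ]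
    [TopologicalSpace α] [PolishSpace α] [BorelSpace α] [Nonempty α]
    (πij : Measure (α × β)) (πjk : Measure (β × γ))
    [IsProbabilityMeasure πij] [IsProbabilityMeasure πjk]
    (h : πij.map Prod.snd = πjk.map Prod.fst) :
    ∃ πt : Measure (α × β × γ),
      πt.map (fun w => (w.1, w.2.1)) = πij ∧ πt.map (fun w => w.2) = πjk := by
  set ρ : Measure (β × α) := πij.map Prod.swap with hρ
  haveI : IsProbabilityMeasure ρ := Measure.isProbabilityMeasure_map measurable_swap.aemeasurable
  set κ := ρ.condKernel with hκ
  set η : Kernel (β × γ) α := κ.comap Prod.fst measurable_fst with hη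
  haveI : IsMarkovKernel η := Kernel.IsMarkovKernel.comap _ _
  refine ⟨(πjk ⊗ₘ η).map (fun p => (p.2, p.1)), ?_, ?_⟩
  · rw [Measure.map_map (by fun_prop) (by fun_prop)]
    have h1 : ((fun w : α × β × γ => (w.1, w.2.1)) ∘ (fun p : (β × γ) × α => (p.2, p.1)))
        = Prod.swap ∘ (fun p : (β × γ) × α => (p.1.1, p.2)) := rfl
    rw [h1, ← Measure.map_map measurable_swap (by fun_prop), aux_compProd_comap_fst]
    have hfst : πjk.fst = ρ.fst := by
      rw [Measure.fst, Measure.fst, hρ, Measure.map_map measurable_fst measurable_swap, ← h]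
      rfl
    rw [hfst, hκ, ρ.disintegrate ρ.condKernel, hρ,
      Measure.map_map measurable_swap measurable_swap]
    simp [Prod.swap_swap_eq]
  · rw [Measure.map_map (by fun_prop) (by fun_prop)]
    have h2 : ((fun w : α × β × γ => w.2) ∘ (fun p : (β × γ) × α => (p.2, p.1)))
        = Prod.fst := rfl
    rw [h2, ← Measure.fst, Measure.fst_compProd]

/-- If a cost structure `C` on a class of parameterized measure networks is nonnegative,
symmetric, respects identities, and respects gluing (i.e. it is a symmetric lax
homomorphism), then the induced parameterized Gromov–Wasserstein distance
`GW i j = inf over couplings π of C i j π` is a pseudometric. -/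
theorem parameterizedGW_pseudometric {ι : Type*} (S : ι → Type*)
    [∀ i, MeasurableSpace (S i)] [∀ i, TopologicalSpace (S i)]
    [∀ i, PolishSpace (S i)] [∀ i, BorelSpace (S i)]
    (μ : ∀ i, Measure (S i)) [∀ i, IsProbabilityMeasure (μ i)]
    (C : ∀ i j, Measure (S i × S j) → ℝ)
    (hnonneg : ∀ i j π, 0 ≤ C i j π)
    (hsymm : ∀ i j (π : Measure (S i × S j)), C i j π = C j i (π.map Prod.swap))
    (hid : ∀ i, C i i ((μ i).map (fun x => (x, x))) = 0)
    (hglue : ∀ i j k (πij : Measure (S i × S j)) (πjk : Measure (S j × S k))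
      (πt : Measure (S i × S j × S k)),
      πij.map Prod.fst = μ i → πij.map Prod.snd = μ j →
      πjk.map Prod.fst = μ j → πjk.map Prod.snd = μ k →
      πt.map (fun w => (w.1, w.2.1)) = πij → πt.map (fun w => w.2) = πjk →
      C i k (πt.map (fun w => (w.1, w.2.2))) ≤ C i j πij + C j k πjk) :
    let GW : ι → ι → ℝ := fun i j => sInf {r : ℝ | ∃ π : Measure (S i × S j),
      π.map Prod.fst = μ i ∧ π.map Prod.snd = μ j ∧ r = C i j π}
    (∀ i j, 0 ≤ GW i j) ∧ (∀ i j, GW i j = GW j i) ∧ (∀ i, GW i i = 0) ∧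
      (∀ i j k, GW i k ≤ GW i j + GW j k) := by
  intro GW
  -- the set of attained costs
  set A : ι → ι → Set ℝ := fun i j => {r : ℝ | ∃ π : Measure (S i × S j),
      π.map Prod.fst = μ i ∧ π.map Prod.snd = μ j ∧ r = C i j π} with hA
  have hGW : ∀ i j, GW i j = sInf (A i j) := fun i j => rfl
  have hbdd : ∀ i j, BddBelow (A i j) := by
    rintro i j
    exact ⟨0, by rintro r ⟨π, -, -, rfl⟩; exact hnonneg i j π⟩
  have hne : ∀ i j, (A i j).Nonempty := by
    intro i j
    exact ⟨C i j ((μ i).prod (μ j)), (μ i).prod (μ j), Measure.fst_prod, Measure.snd_prod, rfl⟩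
  have hGWnonneg : ∀ i j, 0 ≤ GW i j := by
    intro i j
    exact le_csInf (hne i j) (by rintro r ⟨π, -, -, rfl⟩; exact hnonneg i j π)
  have hswap_mem : ∀ i j (π : Measure (S i × S j)), π.map Prod.fst = μ i →
      π.map Prod.snd = μ j → C j i (π.map Prod.swap) ∈ A j i := by
    intro i j π h1 h2
    refine ⟨π.map Prod.swap, ?_, ?_, rfl⟩
    · rw [Measure.map_map measurable_fst measurable_swap]; exact h2
    · rw [Measure.map_map measurable_snd measurable_swap]; exact h1
  refine ⟨hGWnonneg, ?_, ?_, ?_⟩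
  · -- symmetry
    intro i j
    have hsub : ∀ i j, A i j ⊆ A j i := by
      rintro i j r ⟨π, h1, h2, rfl⟩
      rw [hsymm i j π]
      exact hswap_mem i j π h1 h2
    have : A i j = A j i := le_antisymm (hsub i j) (hsub j i)
    rw [hGW, hGW, this]
  · -- GW i i = 0
    intro i
    refine le_antisymm ?_ (hGWnonneg i i)
    rw [hGW]
    refine csInf_le (hbdd i i) ?_
    refine ⟨(μ i).map (fun x => (x, x)), ?_, ?_, (hid i).symm⟩
    · rw [Measure.map_map measurable_fst (by fun_prop)]
      exact Measure.map_id
    · rw [Measure.map_map measurable_snd (by fun_prop)]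
      exact Measure.map_id
  · -- triangle inequality
    intro i j k
    have key : ∀ a ∈ A i j, ∀ b ∈ A j k, GW i k ≤ a + b := by
      rintro a ⟨πij, hij1, hij2, rfl⟩ b ⟨πjk, hjk1, hjk2, rfl⟩
      haveI : IsProbabilityMeasure πij := by
        constructor
        have := congrArg (fun m : Measure (S i) => m Set.univ) hij1
        simpa [Measure.map_apply measurable_fst MeasurableSet.univ] using this
      haveI : IsProbabilityMeasure πjk := by
        constructor
        have := congrArg (fun m : Measure (S j) => m Set.univ) hjk1
        simpa [Measure.map_apply measurable_fst MeasurableSet.univ] using this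
      haveI : Nonempty (S i) := by
        by_contra hc
        rw [not_nonempty_iff] at hc
        have h1 : (μ i) Set.univ = 1 := measure_univ
        rw [Set.univ_eq_empty_iff.mpr hc, measure_empty] at h1
        exact zero_ne_one h1
      obtain ⟨πt, ht1, ht2⟩ := gluing_exists πij πjk (by rw [hij2, hjk1])
      have hmem : C i k (πt.map (fun w => (w.1, w.2.2))) ∈ A i k := by
        refine ⟨πt.map (fun w => (w.1, w.2.2)), ?_, ?_, rfl⟩
        · rw [Measure.map_map measurable_fst (by fun_prop)]
          have : (Prod.fst ∘ fun w : S i × S j × S k => (w.1, w.2.2))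
              = (Prod.fst ∘ fun w : S i × S j × S k => (w.1, w.2.1)) := rfl
          rw [this, ← Measure.map_map measurable_fst (by fun_prop), ht1, hij1]
        · rw [Measure.map_map measurable_snd (by fun_prop)]
          have : (Prod.snd ∘ fun w : S i × S j × S k => (w.1, w.2.2))
              = (Prod.snd ∘ fun w : S i × S j × S k => w.2) := rfl
          rw [this, ← Measure.map_map measurable_snd (by fun_prop), ht2, hjk2]
      calc GW i k ≤ C i k (πt.map (fun w => (w.1, w.2.2))) := csInf_le (hbdd i k) hmem
        _ ≤ C i j πij + C j k πjk := hglue i j k πij πjk πt hij1 hij2 hjk1 hjk2 ht1 ht2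
    have h1 : ∀ a ∈ A i j, GW i k - a ≤ GW j k := by
      intro a ha
      exact le_csInf (hne j k) (fun b hb => by linarith [key a ha b hb])
    have h2 : GW i k - GW j k ≤ GW i j :=
      le_csInf (hne i j) (fun a ha => by linarith [h1 a ha])
    linarith
end

section
/- Let X, Y be finite sets with probability measures, Ω a finite parameter space with probability measure ν, and parameterized kernels ω_X^t, ω_Y^t for t∈Ω. For p,q∈[1,∞) with p ≤ q, the parameterized GW cost satisfies inf_π ‖dis_p(π,ω_X,ω_Y)‖_{L^q(Ω;ν)} ≤ inf_π ‖ ‖ω_X(x,x')−ω_Y(y,y')‖_{L^q(Ω;ν)} ‖_{L^p((X×Y)²;π⊗π)}, i.e., the parameterized GW distance is bounded above by the Z-Gromov-Wasserstein distance with Z = L^q(Ω;ν); for p ≥ q the reverse inequality holds, and for p=q they are equal. -/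
open Finset

/-- Coupling predicate for finite probability vectors. -/
def IsCoupling {X Y : Type*} [Fintype X] [Fintype Y]
    (μX : X → ℝ) (μY : Y → ℝ) (π : X → Y → ℝ) : Prop :=
  (∀ x y, 0 ≤ π x y) ∧ (∀ x, ∑ y, π x y = μX x) ∧ (∀ y, ∑ x, π x y = μY y)

/-- Unweighted finite Minkowski inequality for a finite family. -/
lemma minkowski_sum {ι κ : Type*} [Fintype κ] (s : Finset ι) (g : ι → κ → ℝ)
    (hg : ∀ i t, 0 ≤ g i t) {r : ℝ} (hr : 1 ≤ r) :
    (∑ t, (∑ i ∈ s, g i t) ^ r) ^ (1 / r) ≤ ∑ i ∈ s, (∑ t, (g i t) ^ r) ^ (1 / r) := by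
  have hr0 : r ≠ 0 := by positivity
  induction s using Finset.cons_induction with
  | empty =>
      simp [Real.zero_rpow hr0, Real.zero_rpow (inv_ne_zero hr0)]
  | cons a s hnot ih =>
      rw [Finset.sum_cons]
      refine le_trans ?_ (add_le_add (le_refl _) ih)
      have h1 : ∀ t, (∑ i ∈ Finset.cons a s hnot, g i t) = g a t + ∑ i ∈ s, g i t := by
        intro t; rw [Finset.sum_cons]
      simp only [h1]
      have key := Real.Lp_add_le (Finset.univ : Finset κ) (fun t => g a t)
        (fun t => ∑ i ∈ s, g i t) hr
      have habs : ∀ t : κ, |g a t + ∑ i ∈ s, g i t| = g a t + ∑ i ∈ s, g i t := by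
        intro t
        exact abs_of_nonneg (add_nonneg (hg a t) (Finset.sum_nonneg fun i _ => hg i t))
      have habs1 : ∀ t : κ, |g a t| = g a t := fun t => abs_of_nonneg (hg a t)
      have habs2 : ∀ t : κ, |∑ i ∈ s, g i t| = ∑ i ∈ s, g i t := fun t =>
        abs_of_nonneg (Finset.sum_nonneg fun i _ => hg i t)
      simpa only [habs, habs1, habs2] using key

/-- Weighted finite Minkowski integral inequality. -/
lemma minkowski_weighted {ι κ : Type*} [Fintype ι] [Fintype κ] (f : ι → κ → ℝ)
    (hf : ∀ i t, 0 ≤ f i t) (w : κ → ℝ) (hw : ∀ t, 0 ≤ w t) {r : ℝ} (hr : 1 ≤ r) :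
    (∑ t, (∑ i, f i t) ^ r * w t) ^ (1 / r) ≤ ∑ i, (∑ t, (f i t) ^ r * w t) ^ (1 / r) := by
  have hr0 : r ≠ 0 := by positivity
  set g : ι → κ → ℝ := fun i t => f i t * (w t) ^ (1 / r) with hg
  have hgnn : ∀ i t, 0 ≤ g i t := fun i t =>
    mul_nonneg (hf i t) (Real.rpow_nonneg (hw t) _)
  have hwr : ∀ t, ((w t) ^ (1 / r)) ^ r = w t := by
    intro t
    rw [← Real.rpow_mul (hw t), one_div_mul_cancel hr0, Real.rpow_one]
  have key1 : ∀ t, (∑ i, f i t) ^ r * w t = (∑ i, g i t) ^ r := by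
    intro t
    rw [hg]
    simp only
    rw [← Finset.sum_mul,
      Real.mul_rpow (Finset.sum_nonneg fun i _ => hf i t) (Real.rpow_nonneg (hw t) _), hwr t]
  have key2 : ∀ i t, (f i t) ^ r * w t = (g i t) ^ r := by
    intro i t
    rw [hg]
    simp only
    rw [Real.mul_rpow (hf i t) (Real.rpow_nonneg (hw t) _), hwr t]
  simp only [key1, key2]
  exact minkowski_sum Finset.univ g hgnn hr

/-- Core comparison inequality (generalized Minkowski integral inequality). -/
lemma core_ineq {ι κ : Type*} [Fintype ι] [Fintype κ]
    (c : ι → κ → ℝ) (hc : ∀ i t, 0 ≤ c i t) (w : ι → ℝ) (hw : ∀ i, 0 ≤ w i)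
    (ν : κ → ℝ) (hν : ∀ t, 0 ≤ ν t) {p q : ℝ} (hp : 1 ≤ p) (hpq : p ≤ q) :
    (∑ t, (∑ i, c i t ^ p * w i) ^ (q / p) * ν t) ^ (1 / q)
      ≤ (∑ i, (∑ t, c i t ^ q * ν t) ^ (p / q) * w i) ^ (1 / p) := by
  have hp0 : (0:ℝ) < p := lt_of_lt_of_le one_pos hp
  have hq0 : (0:ℝ) < q := lt_of_lt_of_le hp0 hpq
  set r : ℝ := q / p with hrdef
  have hr : 1 ≤ r := (one_le_div hp0).2 hpq
  have hr0 : (0:ℝ) < r := lt_of_lt_of_le one_pos hr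
  have hmink := minkowski_weighted (fun i t => c i t ^ p * w i)
    (fun i t => mul_nonneg (Real.rpow_nonneg (hc i t) _) (hw i)) ν hν hr
  have hpr : p * r = q := by
    rw [hrdef]; field_simp
  have h1r : (1 : ℝ) / r = p / q := by
    rw [hrdef]; field_simp
  have hrhs : ∀ i : ι, (∑ t, ((c i t ^ p * w i) ^ r) * ν t) ^ (1 / r)
      = (∑ t, c i t ^ q * ν t) ^ (p / q) * w i := by
    intro i
    have h1 : ∀ t : κ, ((c i t ^ p * w i) ^ r) * ν t = (c i t ^ q * ν t) * w i ^ r := by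
      intro t
      rw [Real.mul_rpow (Real.rpow_nonneg (hc i t) _) (hw i), ← Real.rpow_mul (hc i t), hpr]
      ring
    simp only [h1]
    rw [← Finset.sum_mul,
      Real.mul_rpow
        (Finset.sum_nonneg fun t _ => mul_nonneg (Real.rpow_nonneg (hc i t) _) (hν t))
        (Real.rpow_nonneg (hw i) _),
      ← Real.rpow_mul (hw i), mul_one_div_cancel (ne_of_gt hr0), Real.rpow_one, h1r]
  simp only [hrhs] at hmink
  have hS : (0:ℝ) ≤ ∑ t, (∑ i, c i t ^ p * w i) ^ r * ν t :=
    Finset.sum_nonneg fun t _ => mul_nonneg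
      (Real.rpow_nonneg (Finset.sum_nonneg fun i _ =>
        mul_nonneg (Real.rpow_nonneg (hc i t) _) (hw i)) _) (hν t)
  have hstep : ((∑ t, (∑ i, c i t ^ p * w i) ^ r * ν t) ^ (1 / r)) ^ (1 / p)
      ≤ ((∑ i, (∑ t, c i t ^ q * ν t) ^ (p / q) * w i)) ^ (1 / p) :=
    Real.rpow_le_rpow (Real.rpow_nonneg hS _) hmink (by positivity)
  have heq : ((∑ t, (∑ i, c i t ^ p * w i) ^ r * ν t) ^ (1 / r)) ^ (1 / p)
      = (∑ t, (∑ i, c i t ^ p * w i) ^ r * ν t) ^ (1 / q) := by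
    rw [← Real.rpow_mul hS]
    congr 1
    rw [h1r]
    field_simp
  rw [heq] at hstep
  exact hstep

/-- Comparison between the parameterized Gromov–Wasserstein distance over a fixed
finite parameter space `(Ω, ν)` and the Z-Gromov–Wasserstein distance with
`Z = L^q(Ω; ν)`: for `p ≤ q` the parameterized GW cost is dominated by the Z-GW cost,
for `p ≥ q` the reverse inequality holds, and for `p = q` they agree. -/
theorem parameterizedGW_vs_ZGW {X Y Ω : Type*} [Fintype X] [Fintype Y] [Fintype Ω]
    (μX : X → ℝ) (μY : Y → ℝ) (ν : Ω → ℝ)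
    (hμX0 : ∀ x, 0 ≤ μX x) (hμX1 : ∑ x, μX x = 1)
    (hμY0 : ∀ y, 0 ≤ μY y) (hμY1 : ∑ y, μY y = 1)
    (hν0 : ∀ t, 0 ≤ ν t) (hν1 : ∑ t, ν t = 1)
    (ωX : Ω → X → X → ℝ) (ωY : Ω → Y → Y → ℝ)
    (p q : ℝ) (hp : 1 ≤ p) (hq : 1 ≤ q) :
    let A : (X → Y → ℝ) → ℝ := fun π =>
      (∑ t, (∑ x, ∑ y, ∑ x', ∑ y',
        |ωX t x x' - ωY t y y'| ^ p * (π x y * π x' y')) ^ (q / p) * ν t) ^ (1 / q)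
    let B : (X → Y → ℝ) → ℝ := fun π =>
      (∑ x, ∑ y, ∑ x', ∑ y',
        (∑ t, |ωX t x x' - ωY t y y'| ^ q * ν t) ^ (p / q) * (π x y * π x' y')) ^ (1 / p)
    (p ≤ q → sInf {r : ℝ | ∃ π, IsCoupling μX μY π ∧ r = A π}
        ≤ sInf {r : ℝ | ∃ π, IsCoupling μX μY π ∧ r = B π}) ∧
    (q ≤ p → sInf {r : ℝ | ∃ π, IsCoupling μX μY π ∧ r = B π}
        ≤ sInf {r : ℝ | ∃ π, IsCoupling μX μY π ∧ r = A π}) ∧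
    (p = q → sInf {r : ℝ | ∃ π, IsCoupling μX μY π ∧ r = A π}
        = sInf {r : ℝ | ∃ π, IsCoupling μX μY π ∧ r = B π}) := by
  intro A B
  -- notation for product index
  set c : (X × Y × X × Y) → Ω → ℝ :=
    fun z t => |ωX t z.1 z.2.2.1 - ωY t z.2.1 z.2.2.2| with hc
  have hcnn : ∀ z t, 0 ≤ c z t := fun z t => abs_nonneg _
  have hAeq : ∀ π : X → Y → ℝ,
      A π = (∑ t, (∑ z : X × Y × X × Y, c z t ^ p *
        (π z.1 z.2.1 * π z.2.2.1 z.2.2.2)) ^ (q / p) * ν t) ^ (1 / q) := by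
    intro π
    simp only [A, hc, Fintype.sum_prod_type]
  have hBeq : ∀ π : X → Y → ℝ,
      B π = (∑ z : X × Y × X × Y, (∑ t, c z t ^ q * ν t) ^ (p / q) *
        (π z.1 z.2.1 * π z.2.2.1 z.2.2.2)) ^ (1 / p) := by
    intro π
    simp only [B, hc, Fintype.sum_prod_type]
  have hAB : p ≤ q → ∀ π : X → Y → ℝ, IsCoupling μX μY π → A π ≤ B π := by
    intro hpq π hπ
    rw [hAeq, hBeq]
    exact core_ineq c hcnn (fun z => π z.1 z.2.1 * π z.2.2.1 z.2.2.2)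
      (fun z => mul_nonneg (hπ.1 _ _) (hπ.1 _ _)) ν hν0 hp hpq
  have hBA : q ≤ p → ∀ π : X → Y → ℝ, IsCoupling μX μY π → B π ≤ A π := by
    intro hqp π hπ
    rw [hAeq, hBeq]
    exact core_ineq (fun t z => c z t) (fun t z => hcnn z t) ν hν0
      (fun z => π z.1 z.2.1 * π z.2.2.1 z.2.2.2)
      (fun z => mul_nonneg (hπ.1 _ _) (hπ.1 _ _)) hq hqp
  -- the product coupling
  have hπ0 : IsCoupling μX μY (fun x y => μX x * μY y) := by
    refine ⟨fun x y => mul_nonneg (hμX0 x) (hμY0 y), fun x => ?_, fun y => ?_⟩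
    · rw [← Finset.mul_sum, hμY1, mul_one]
    · rw [← Finset.sum_mul, hμX1, one_mul]
  have hAne : {r : ℝ | ∃ π, IsCoupling μX μY π ∧ r = A π}.Nonempty :=
    ⟨A (fun x y => μX x * μY y), ⟨_, hπ0, rfl⟩⟩
  have hBne : {r : ℝ | ∃ π, IsCoupling μX μY π ∧ r = B π}.Nonempty :=
    ⟨B (fun x y => μX x * μY y), ⟨_, hπ0, rfl⟩⟩
  have hAnn : ∀ π : X → Y → ℝ, IsCoupling μX μY π → 0 ≤ A π := by
    intro π hπ
    rw [hAeq]
    apply Real.rpow_nonneg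
    exact Finset.sum_nonneg fun t _ => mul_nonneg
      (Real.rpow_nonneg (Finset.sum_nonneg fun z _ => mul_nonneg
        (Real.rpow_nonneg (hcnn z t) _) (mul_nonneg (hπ.1 _ _) (hπ.1 _ _))) _) (hν0 t)
  have hBnn : ∀ π : X → Y → ℝ, IsCoupling μX μY π → 0 ≤ B π := by
    intro π hπ
    rw [hBeq]
    apply Real.rpow_nonneg
    exact Finset.sum_nonneg fun z _ => mul_nonneg
      (Real.rpow_nonneg (Finset.sum_nonneg fun t _ => mul_nonneg
        (Real.rpow_nonneg (hcnn z t) _) (hν0 t)) _) (mul_nonneg (hπ.1 _ _) (hπ.1 _ _))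
  have hAbdd : BddBelow {r : ℝ | ∃ π, IsCoupling μX μY π ∧ r = A π} := by
    refine ⟨0, fun r hr => ?_⟩
    obtain ⟨π, hπ, rfl⟩ := hr
    exact hAnn π hπ
  have hBbdd : BddBelow {r : ℝ | ∃ π, IsCoupling μX μY π ∧ r = B π} := by
    refine ⟨0, fun r hr => ?_⟩
    obtain ⟨π, hπ, rfl⟩ := hr
    exact hBnn π hπ
  have h1 : p ≤ q → sInf {r : ℝ | ∃ π, IsCoupling μX μY π ∧ r = A π}
      ≤ sInf {r : ℝ | ∃ π, IsCoupling μX μY π ∧ r = B π} := by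
    intro hpq
    refine le_csInf hBne ?_
    rintro b ⟨π, hπ, rfl⟩
    exact le_trans (csInf_le hAbdd ⟨π, hπ, rfl⟩) (hAB hpq π hπ)
  have h2 : q ≤ p → sInf {r : ℝ | ∃ π, IsCoupling μX μY π ∧ r = B π}
      ≤ sInf {r : ℝ | ∃ π, IsCoupling μX μY π ∧ r = A π} := by
    intro hqp
    refine le_csInf hAne ?_
    rintro b ⟨π, hπ, rfl⟩
    exact le_trans (csInf_le hBbdd ⟨π, hπ, rfl⟩) (hBA hqp π hπ)
  exact ⟨h1, h2, fun hpq => le_antisymm (h1 hpq.le) (h2 hpq.ge)⟩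
end

section
/- Let X and Y be finite sets with probability measures μ_X, μ_Y, Ω_X and Ω_Y finite parameter spaces with probability measures ν_X, ν_Y, and parameterized kernels ω_X:Ω_X→(X×X→ℝ), ω_Y:Ω_Y→(Y×Y→ℝ). Define m_X(t) = (X,μ_X,ω_X^t) as a measure network, ν̄_X = (m_X)_#ν_X as a measure on the space of measure networks modulo weak isomorphism metrized by GW_p, and similarly ν̄_Y. Then for p,q∈[1,∞), W_q^{GW_p}(ν̄_X, ν̄_Y) ≤ GW_C(X,Y), where GW_C(X,Y) = (1/2) inf_{π} inf_{ξ} (∫_{Ω_X×Ω_Y} dis_p(π,ω_X^s,ω_Y^t)^q dξ(s,t))^{1/q} with π ranging over couplings of (μ_X,μ_Y) and ξ over couplings of (ν_X,ν_Y). -/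
open Finset

/-- The `p`-distortion of a coupling with respect to two kernels. -/
noncomputable def dis {X Y : Type*} [Fintype X] [Fintype Y]
    (p : ℝ) (π : X → Y → ℝ) (f : X → X → ℝ) (g : Y → Y → ℝ) : ℝ :=
  (∑ x, ∑ y, ∑ x', ∑ y', |f x x' - g y y'| ^ p * (π x y * π x' y')) ^ (1 / p)

lemma dis_nonneg {X Y : Type*} [Fintype X] [Fintype Y]
    (p : ℝ) (π : X → Y → ℝ) (hπ : ∀ x y, 0 ≤ π x y)
    (f : X → X → ℝ) (g : Y → Y → ℝ) : 0 ≤ dis p π f g := by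
  apply Real.rpow_nonneg
  apply Finset.sum_nonneg; intro x _
  apply Finset.sum_nonneg; intro y _
  apply Finset.sum_nonneg; intro x' _
  apply Finset.sum_nonneg; intro y' _
  have := hπ x y; have := hπ x' y'
  positivity

lemma prod_isCoupling {X Y : Type*} [Fintype X] [Fintype Y]
    (μX : X → ℝ) (μY : Y → ℝ)
    (h0X : ∀ x, 0 ≤ μX x) (h1X : ∑ x, μX x = 1)
    (h0Y : ∀ y, 0 ≤ μY y) (h1Y : ∑ y, μY y = 1) :
    IsCoupling μX μY (fun x y => μX x * μY y) := by
  refine ⟨fun x y => mul_nonneg (h0X x) (h0Y y), fun x => ?_, fun y => ?_⟩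
  · rw [← Finset.mul_sum, h1Y, mul_one]
  · rw [← Finset.sum_mul, h1X, one_mul]

/-- The Wasserstein distance (over the Gromov–Wasserstein space) between the pushforward
parameter measures of two pm-nets is a lower bound for the parameterized
Gromov–Wasserstein distance. Here `GWp s t` is the GW distance between the measure
networks `(X, μX, ωX s)` and `(Y, μY, ωY t)`, and the Wasserstein distance `W` is
computed with ground cost `GWp` over couplings of the parameter measures. -/
theorem wasserstein_le_parameterizedGW {X Y ΩX ΩY : Type*}
    [Fintype X] [Fintype Y] [Fintype ΩX] [Fintype ΩY]
    (μX : X → ℝ) (μY : Y → ℝ) (νX : ΩX → ℝ) (νY : ΩY → ℝ)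
    (hμX0 : ∀ x, 0 ≤ μX x) (hμX1 : ∑ x, μX x = 1)
    (hμY0 : ∀ y, 0 ≤ μY y) (hμY1 : ∑ y, μY y = 1)
    (hνX0 : ∀ s, 0 ≤ νX s) (hνX1 : ∑ s, νX s = 1)
    (hνY0 : ∀ t, 0 ≤ νY t) (hνY1 : ∑ t, νY t = 1)
    (ωX : ΩX → X → X → ℝ) (ωY : ΩY → Y → Y → ℝ)
    (p q : ℝ) (hp : 1 ≤ p) (hq : 1 ≤ q) :
    let GWp : ΩX → ΩY → ℝ := fun s t =>
      (1 / 2) * sInf {r : ℝ | ∃ π, IsCoupling μX μY π ∧ r = dis p π (ωX s) (ωY t)}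
    let W : ℝ := sInf {r : ℝ | ∃ ξ : ΩX → ΩY → ℝ, IsCoupling νX νY ξ ∧
      r = (∑ s, ∑ t, GWp s t ^ q * ξ s t) ^ (1 / q)}
    let GWC : ℝ := (1 / 2) * sInf {r : ℝ | ∃ (π : X → Y → ℝ) (ξ : ΩX → ΩY → ℝ),
      IsCoupling μX μY π ∧ IsCoupling νX νY ξ ∧
      r = (∑ s, ∑ t, dis p π (ωX s) (ωY t) ^ q * ξ s t) ^ (1 / q)}
    W ≤ GWC := by
  intro GWp W GWC
  have hq0 : (0:ℝ) < q := lt_of_lt_of_le one_pos hq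
  have hq0' : (0:ℝ) ≤ 1 / q := by positivity
  -- GWp is nonneg
  have hGWp0 : ∀ s t, 0 ≤ GWp s t := by
    intro s t
    apply mul_nonneg (by norm_num)
    apply Real.sInf_nonneg
    rintro r ⟨π, hπ, rfl⟩
    exact dis_nonneg p π hπ.1 _ _
  -- the W set is bounded below by 0
  have hWbdd : BddBelow {r : ℝ | ∃ ξ : ΩX → ΩY → ℝ, IsCoupling νX νY ξ ∧
      r = (∑ s, ∑ t, GWp s t ^ q * ξ s t) ^ (1 / q)} := by
    refine ⟨0, ?_⟩
    rintro r ⟨ξ, hξ, rfl⟩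
    apply Real.rpow_nonneg
    apply Finset.sum_nonneg; intro s _
    apply Finset.sum_nonneg; intro t _
    exact mul_nonneg (Real.rpow_nonneg (hGWp0 s t) q) (hξ.1 s t)
  -- key: W ≤ (1/2) * r for each r in the GWC set
  have key : ∀ r ∈ {r : ℝ | ∃ (π : X → Y → ℝ) (ξ : ΩX → ΩY → ℝ),
      IsCoupling μX μY π ∧ IsCoupling νX νY ξ ∧
      r = (∑ s, ∑ t, dis p π (ωX s) (ωY t) ^ q * ξ s t) ^ (1 / q)}, W ≤ (1/2) * r := by
    rintro r ⟨π, ξ, hπ, hξ, rfl⟩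
    have hWle : W ≤ (∑ s, ∑ t, GWp s t ^ q * ξ s t) ^ (1 / q) :=
      csInf_le hWbdd ⟨ξ, hξ, rfl⟩
    refine hWle.trans ?_
    have hsum : (∑ s, ∑ t, GWp s t ^ q * ξ s t)
        ≤ (1/2 : ℝ) ^ q * ∑ s, ∑ t, dis p π (ωX s) (ωY t) ^ q * ξ s t := by
      rw [Finset.mul_sum]
      apply Finset.sum_le_sum; intro s _
      rw [Finset.mul_sum]
      apply Finset.sum_le_sum; intro t _
      have hGle : GWp s t ≤ (1/2) * dis p π (ωX s) (ωY t) := by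
        have hbdd : BddBelow {r : ℝ | ∃ π, IsCoupling μX μY π ∧
            r = dis p π (ωX s) (ωY t)} := by
          refine ⟨0, ?_⟩
          rintro r ⟨π', hπ', rfl⟩
          exact dis_nonneg p π' hπ'.1 _ _
        have := csInf_le hbdd (show dis p π (ωX s) (ωY t) ∈ _ from ⟨π, hπ, rfl⟩)
        have h2 : (0:ℝ) ≤ 1/2 := by norm_num
        calc GWp s t = (1/2) * sInf _ := rfl
          _ ≤ (1/2) * dis p π (ωX s) (ωY t) := by
              exact mul_le_mul_of_nonneg_left this h2
      have hpow : GWp s t ^ q ≤ ((1/2) * dis p π (ωX s) (ωY t)) ^ q :=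
        Real.rpow_le_rpow (hGWp0 s t) hGle (le_of_lt hq0)
      have hmul : ((1/2 : ℝ) * dis p π (ωX s) (ωY t)) ^ q
          = (1/2 : ℝ) ^ q * dis p π (ωX s) (ωY t) ^ q :=
        Real.mul_rpow (by norm_num) (dis_nonneg p π hπ.1 _ _)
      calc GWp s t ^ q * ξ s t
          ≤ ((1/2 : ℝ) * dis p π (ωX s) (ωY t)) ^ q * ξ s t :=
            mul_le_mul_of_nonneg_right hpow (hξ.1 s t)
        _ = (1/2 : ℝ) ^ q * (dis p π (ωX s) (ωY t) ^ q * ξ s t) := by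
            rw [hmul, mul_assoc]
    have hA0 : 0 ≤ ∑ s, ∑ t, dis p π (ωX s) (ωY t) ^ q * ξ s t := by
      apply Finset.sum_nonneg; intro s _
      apply Finset.sum_nonneg; intro t _
      exact mul_nonneg (Real.rpow_nonneg (dis_nonneg p π hπ.1 _ _) q) (hξ.1 s t)
    have hL0 : 0 ≤ ∑ s, ∑ t, GWp s t ^ q * ξ s t := by
      apply Finset.sum_nonneg; intro s _
      apply Finset.sum_nonneg; intro t _
      exact mul_nonneg (Real.rpow_nonneg (hGWp0 s t) q) (hξ.1 s t)
    calc (∑ s, ∑ t, GWp s t ^ q * ξ s t) ^ (1 / q)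
        ≤ ((1/2 : ℝ) ^ q * ∑ s, ∑ t, dis p π (ωX s) (ωY t) ^ q * ξ s t) ^ (1 / q) :=
          Real.rpow_le_rpow hL0 hsum hq0'
      _ = ((1/2 : ℝ) ^ q) ^ (1/q) * (∑ s, ∑ t, dis p π (ωX s) (ωY t) ^ q * ξ s t) ^ (1 / q) :=
          Real.mul_rpow (Real.rpow_nonneg (by norm_num) q) hA0
      _ = (1/2 : ℝ) * (∑ s, ∑ t, dis p π (ωX s) (ωY t) ^ q * ξ s t) ^ (1 / q) := by
          rw [← Real.rpow_mul (by norm_num : (0:ℝ) ≤ 1/2),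
            mul_one_div_cancel (ne_of_gt hq0), Real.rpow_one]
  -- the GWC set is nonempty
  have hne : Set.Nonempty {r : ℝ | ∃ (π : X → Y → ℝ) (ξ : ΩX → ΩY → ℝ),
      IsCoupling μX μY π ∧ IsCoupling νX νY ξ ∧
      r = (∑ s, ∑ t, dis p π (ωX s) (ωY t) ^ q * ξ s t) ^ (1 / q)} := by
    refine ⟨_, fun x y => μX x * μY y, fun s t => νX s * νY t,
      prod_isCoupling μX μY hμX0 hμX1 hμY0 hμY1,
      prod_isCoupling νX νY hνX0 hνX1 hνY0 hνY1, rfl⟩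
  have h2W : 2 * W ≤ sInf {r : ℝ | ∃ (π : X → Y → ℝ) (ξ : ΩX → ΩY → ℝ),
      IsCoupling μX μY π ∧ IsCoupling νX νY ξ ∧
      r = (∑ s, ∑ t, dis p π (ωX s) (ωY t) ^ q * ξ s t) ^ (1 / q)} := by
    apply le_csInf hne
    intro r hr
    linarith [key r hr]
  show W ≤ (1/2) * _
  linarith
end

section
/- Let X be a finite set with probability measure μ_X, let Ω_X ⊂ L^∞(X×X;μ_X⊗μ_X) be a compact set of kernels with the metric d_{Ω_X,p} induced by the L^p norm, and ν_X a probability measure on Ω_X. Let X_{T_N} be the empirical pm-net built from N i.i.d. samples t_1,…,t_N from ν_X with empirical measure ν_N. Then GW_C(X_{T_N}, X) ≤ W_q^{d_{Ω_X,p}}(ν_N, ν_X), where C is the cost structure with parameters p∈[1,∞], q∈[1,∞) allowing couplings of both the underlying measures and the parameter measures. -/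
open Finset

/-- The parameterized GW distance between the empirical pm-net built from samples
`T : Fin N → Ω` (with uniform empirical weights `1/N`) and the full random measure
network model `(X, μX, Ω, νX)` is bounded above by the `q`-Wasserstein distance between
the empirical measure and `νX`, with ground metric the `L^p(μX ⊗ μX)` distance between
kernels. -/
theorem empiricalGW_le_wasserstein {X Ω : Type*} [Fintype X] [Fintype Ω]
    (μX : X → ℝ) (νX : Ω → ℝ)
    (hμX0 : ∀ x, 0 ≤ μX x) (hμX1 : ∑ x, μX x = 1)
    (hνX0 : ∀ s, 0 ≤ νX s) (hνX1 : ∑ s, νX s = 1)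
    (ω : Ω → X → X → ℝ)
    (p q : ℝ) (hp : 1 ≤ p) (hq : 1 ≤ q)
    (N : ℕ) (hN : 0 < N) (T : Fin N → Ω) :
    let dLp : (X → X → ℝ) → (X → X → ℝ) → ℝ := fun f g =>
      (∑ x, ∑ x', |f x x' - g x x'| ^ p * (μX x * μX x')) ^ (1 / p)
    let GWC : ℝ := sInf {r : ℝ | ∃ (ξ : Fin N → Ω → ℝ) (π : X → X → ℝ),
      IsCoupling (fun _ : Fin N => (1 : ℝ) / N) νX ξ ∧ IsCoupling μX μX π ∧
      r = (∑ i, ∑ s, dis p π (ω (T i)) (ω s) ^ q * ξ i s) ^ (1 / q)}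
    let W : ℝ := sInf {r : ℝ | ∃ ξ : Fin N → Ω → ℝ,
      IsCoupling (fun _ : Fin N => (1 : ℝ) / N) νX ξ ∧
      r = (∑ i, ∑ s, dLp (ω (T i)) (ω s) ^ q * ξ i s) ^ (1 / q)}
    GWC ≤ W := by
  intro dLp GWC W
  classical
  set π₀ : X → X → ℝ := fun x y => if x = y then μX x else 0 with hπ₀
  have hπcoup : IsCoupling μX μX π₀ := by
    refine ⟨fun x y => ?_, fun x => ?_, fun y => ?_⟩
    · by_cases h : x = y <;> simp [hπ₀, h, hμX0 x, hμX0 y]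
    · simp [hπ₀]
    · simp [hπ₀]
  have key : ∀ f g : X → X → ℝ, dis p π₀ f g = dLp f g := by
    intro f g
    unfold dis
    congr 1
    refine Finset.sum_congr rfl fun x _ => ?_
    rw [Finset.sum_comm]
    refine Finset.sum_congr rfl fun x' _ => ?_
    simp [hπ₀, mul_ite, ite_mul, Finset.sum_ite_eq, Finset.sum_ite_eq']
  have hNval : (N : ℝ) ≠ 0 := Nat.cast_ne_zero.mpr hN.ne'
  apply csInf_le_csInf
  · refine ⟨0, fun r hr => ?_⟩
    obtain ⟨ξ, π, hξ, hπ, rfl⟩ := hr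
    apply Real.rpow_nonneg
    apply Finset.sum_nonneg; intro i _
    apply Finset.sum_nonneg; intro s _
    refine mul_nonneg (Real.rpow_nonneg ?_ q) (hξ.1 i s)
    apply Real.rpow_nonneg
    apply Finset.sum_nonneg; intro a _
    apply Finset.sum_nonneg; intro b _
    apply Finset.sum_nonneg; intro c _
    apply Finset.sum_nonneg; intro d _
    exact mul_nonneg (Real.rpow_nonneg (abs_nonneg _) _)
      (mul_nonneg (hπ.1 _ _) (hπ.1 _ _))
  · refine ⟨_, ⟨fun _ s => νX s / N, ⟨fun i s => div_nonneg (hνX0 s) (Nat.cast_nonneg N),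
      fun i => ?_, fun s => ?_⟩, rfl⟩⟩
    · rw [← Finset.sum_div, hνX1]
    · rw [Finset.sum_const, Finset.card_univ, Fintype.card_fin, nsmul_eq_mul,
        mul_div_cancel₀ _ hNval]
  · rintro r ⟨ξ, hξ, rfl⟩
    exact ⟨ξ, π₀, hξ, hπcoup, by simp only [key]⟩
end

section
/- Let X, Y be finite sets with probability measures and ω_X^t, ω_Y^t parameterized kernels over a common finite parameter space Ω with measure ν. If GW_C(X,Y) = 0 for the fixed-parameter cost structure with p,q∈[1,∞), then there exists a coupling π of (μ_X,μ_Y) such that ω_X^t(x,x') = ω_Y^t(y,y') for all t∈Ω with ν(t)>0 and all pairs (x,y),(x',y') in the support of π. Consequently, the pm-net Z=(X×Y, π, Ω, ν, ω_Z) with ω_Z^t((x,y),(x',y')) = ω_X^t(x,x') is a stabilization of X and Y via the coordinate projections. -/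
open Finset

/-- If the parameterized GW distance between two pm-nets over a common finite parameter
space vanishes, then there is a coupling `π` of the underlying measures along which the
kernels agree at every parameter of positive weight and on the support of `π`: this
exhibits `(X × Y, π, Ω, ν)` with the kernel pulled back along the first projection as a
stabilization of the two pm-nets. -/
theorem stabilization_of_parameterizedGW_eq_zero
    {X Y Ω : Type*} [Fintype X] [Fintype Y] [Fintype Ω]
    (μX : X → ℝ) (μY : Y → ℝ) (ν : Ω → ℝ)
    (hμX0 : ∀ x, 0 ≤ μX x) (hμX1 : ∑ x, μX x = 1)
    (hμY0 : ∀ y, 0 ≤ μY y) (hμY1 : ∑ y, μY y = 1)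
    (hν0 : ∀ s, 0 ≤ ν s) (hν1 : ∑ s, ν s = 1)
    (ωX : Ω → X → X → ℝ) (ωY : Ω → Y → Y → ℝ)
    (p q : ℝ) (hp : 1 ≤ p) (hq : 1 ≤ q)
    (hzero : (1 / 2 : ℝ) * sInf {r : ℝ | ∃ π : X → Y → ℝ, IsCoupling μX μY π ∧
      r = (∑ s, dis p π (ωX s) (ωY s) ^ q * ν s) ^ (1 / q)} = 0) :
    ∃ π : X → Y → ℝ, IsCoupling μX μY π ∧
      ∀ s, 0 < ν s → ∀ x y x' y', 0 < π x y → 0 < π x' y' →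
        ωX s x x' = ωY s y y' := by
  have hp0 : (0:ℝ) < p := lt_of_lt_of_le one_pos hp
  have hq0 : (0:ℝ) < q := lt_of_lt_of_le one_pos hq
  set F : (X → Y → ℝ) → ℝ :=
    fun π => (∑ s, dis p π (ωX s) (ωY s) ^ q * ν s) ^ (1 / q) with hF
  set K : Set (X → Y → ℝ) := {π | IsCoupling μX μY π} with hKdef
  -- continuity of F
  have hrpow : ∀ c : ℝ, 0 < c → Continuous fun x : ℝ => x ^ c := fun c hc =>
    continuous_iff_continuousAt.2 fun x =>
      Real.continuousAt_rpow_const x c (Or.inr hc.le)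
  have hcπ : ∀ (x : X) (y : Y), Continuous fun π : X → Y → ℝ => π x y := fun x y =>
    (continuous_apply y).comp (continuous_apply x)
  have hdis : ∀ s, Continuous fun π : X → Y → ℝ => dis p π (ωX s) (ωY s) := by
    intro s
    unfold dis
    exact (hrpow _ (by positivity)).comp <|
      continuous_finset_sum _ fun x _ => continuous_finset_sum _ fun y _ =>
        continuous_finset_sum _ fun x' _ => continuous_finset_sum _ fun y' _ =>
          continuous_const.mul ((hcπ x y).mul (hcπ x' y'))
  have hFcont : Continuous F :=
    (hrpow _ (by positivity)).comp <|
      continuous_finset_sum _ fun s _ => ((hrpow q hq0).comp (hdis s)).mul continuous_const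
  -- compactness of K
  have hKclosed : IsClosed K := by
    have h1 : IsClosed {π : X → Y → ℝ | ∀ x y, 0 ≤ π x y} := by
      simp only [Set.setOf_forall]
      exact isClosed_iInter fun x => isClosed_iInter fun y =>
        isClosed_le continuous_const (hcπ x y)
    have h2 : IsClosed {π : X → Y → ℝ | ∀ x, ∑ y, π x y = μX x} := by
      simp only [Set.setOf_forall]
      exact isClosed_iInter fun x =>
        isClosed_eq (continuous_finset_sum _ fun y _ => hcπ x y) continuous_const
    have h3 : IsClosed {π : X → Y → ℝ | ∀ y, ∑ x, π x y = μY y} := by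
      simp only [Set.setOf_forall]
      exact isClosed_iInter fun y =>
        isClosed_eq (continuous_finset_sum _ fun x _ => hcπ x y) continuous_const
    have : K = {π : X → Y → ℝ | ∀ x y, 0 ≤ π x y} ∩
        ({π | ∀ x, ∑ y, π x y = μX x} ∩ {π | ∀ y, ∑ x, π x y = μY y}) := by
      ext π; simp [hKdef, IsCoupling, Set.mem_setOf_eq, and_assoc]
    rw [this]
    exact h1.inter (h2.inter h3)
  have hsub : K ⊆ Set.pi Set.univ fun _ : X => Set.pi Set.univ fun _ : Y => Set.Icc (0:ℝ) 1 := by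
    intro π hπ
    obtain ⟨h0, h1, h2⟩ := hπ
    intro x _ y _
    refine ⟨h0 x y, ?_⟩
    calc π x y ≤ ∑ y', π x y' := Finset.single_le_sum (fun y' _ => h0 x y') (mem_univ y)
      _ = μX x := h1 x
      _ ≤ ∑ x', μX x' := Finset.single_le_sum (fun x' _ => hμX0 x') (mem_univ x)
      _ = 1 := hμX1
  have hKcomp : IsCompact K :=
    ((isCompact_univ_pi fun _ => isCompact_univ_pi fun _ => isCompact_Icc).of_isClosed_subset
      hKclosed hsub)
  have hKne : K.Nonempty := by
    refine ⟨fun x y => μX x * μY y, fun x y => mul_nonneg (hμX0 x) (hμY0 y), ?_, ?_⟩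
    · intro x; rw [← Finset.mul_sum, hμY1, mul_one]
    · intro y; rw [← Finset.sum_mul, hμX1, one_mul]
  obtain ⟨π₀, hπ₀K, hmin⟩ := hKcomp.exists_isMinOn hKne hFcont.continuousOn
  have hmin' : ∀ π ∈ K, F π₀ ≤ F π := fun π hπ => isMinOn_iff.mp hmin π hπ
  -- the set in hzero is F '' K
  have hSimg : {r : ℝ | ∃ π : X → Y → ℝ, IsCoupling μX μY π ∧
      r = (∑ s, dis p π (ωX s) (ωY s) ^ q * ν s) ^ (1 / q)} = F '' K := by
    ext r
    constructor
    · rintro ⟨π, hπ, rfl⟩; exact ⟨π, hπ, rfl⟩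
    · rintro ⟨π, hπ, rfl⟩; exact ⟨π, hπ, rfl⟩
  have hInf : sInf (F '' K) = F π₀ := by
    apply le_antisymm
    · exact csInf_le ⟨F π₀, by rintro r ⟨π, hπ, rfl⟩; exact hmin' π hπ⟩ ⟨π₀, hπ₀K, rfl⟩
    · exact le_csInf ⟨F π₀, π₀, hπ₀K, rfl⟩ (by rintro r ⟨π, hπ, rfl⟩; exact hmin' π hπ)
  have hFπ₀ : F π₀ = 0 := by
    rw [hSimg, hInf] at hzero
    linarith
  -- extract pointwise equalities
  refine ⟨π₀, hπ₀K, ?_⟩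
  have hdis_nonneg : ∀ s, 0 ≤ dis p π₀ (ωX s) (ωY s) := fun s =>
    Real.rpow_nonneg (Finset.sum_nonneg fun x _ => Finset.sum_nonneg fun y _ =>
      Finset.sum_nonneg fun x' _ => Finset.sum_nonneg fun y' _ =>
        mul_nonneg (Real.rpow_nonneg (abs_nonneg _) _)
          (mul_nonneg (hπ₀K.1 x y) (hπ₀K.1 x' y'))) _
  have hsum0 : ∑ s, dis p π₀ (ωX s) (ωY s) ^ q * ν s = 0 := by
    have := hFπ₀
    rw [hF] at this
    exact (Real.rpow_eq_zero (Finset.sum_nonneg fun s _ =>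
      mul_nonneg (Real.rpow_nonneg (hdis_nonneg s) _) (hν0 s))
      (by positivity)).mp this
  have hterm0 : ∀ s, dis p π₀ (ωX s) (ωY s) ^ q * ν s = 0 := by
    have := (Finset.sum_eq_zero_iff_of_nonneg fun s _ =>
      mul_nonneg (Real.rpow_nonneg (hdis_nonneg s) _) (hν0 s)).mp hsum0
    exact fun s => this s (mem_univ s)
  intro s hνs x y x' y' hxy hx'y'
  have hdis0 : dis p π₀ (ωX s) (ωY s) = 0 := by
    have h1 : dis p π₀ (ωX s) (ωY s) ^ q = 0 := by
      have := hterm0 s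
      rcases mul_eq_zero.mp this with h | h
      · exact h
      · exact absurd h (ne_of_gt hνs)
    exact (Real.rpow_eq_zero (hdis_nonneg s) (ne_of_gt hq0)).mp h1
  have hinner0 : ∑ x, ∑ y, ∑ x', ∑ y',
      |ωX s x x' - ωY s y y'| ^ p * (π₀ x y * π₀ x' y') = 0 := by
    unfold dis at hdis0
    exact (Real.rpow_eq_zero (Finset.sum_nonneg fun x _ => Finset.sum_nonneg fun y _ =>
      Finset.sum_nonneg fun x' _ => Finset.sum_nonneg fun y' _ =>
        mul_nonneg (Real.rpow_nonneg (abs_nonneg _) _)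
          (mul_nonneg (hπ₀K.1 x y) (hπ₀K.1 x' y'))) (by positivity)).mp hdis0
  have hterm : |ωX s x x' - ωY s y y'| ^ p * (π₀ x y * π₀ x' y') = 0 := by
    have hnn : ∀ (a : X) (b : Y) (a' : X) (b' : Y),
        0 ≤ |ωX s a a' - ωY s b b'| ^ p * (π₀ a b * π₀ a' b') := fun a b a' b' =>
      mul_nonneg (Real.rpow_nonneg (abs_nonneg _) _)
        (mul_nonneg (hπ₀K.1 a b) (hπ₀K.1 a' b'))
    have h1 := (Finset.sum_eq_zero_iff_of_nonneg fun a _ =>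
      Finset.sum_nonneg fun b _ => Finset.sum_nonneg fun a' _ =>
        Finset.sum_nonneg fun b' _ => hnn a b a' b').mp hinner0 x (mem_univ x)
    have h2 := (Finset.sum_eq_zero_iff_of_nonneg fun b _ =>
      Finset.sum_nonneg fun a' _ => Finset.sum_nonneg fun b' _ => hnn x b a' b').mp h1
        y (mem_univ y)
    have h3 := (Finset.sum_eq_zero_iff_of_nonneg fun a' _ =>
      Finset.sum_nonneg fun b' _ => hnn x y a' b').mp h2 x' (mem_univ x')
    exact (Finset.sum_eq_zero_iff_of_nonneg fun b' _ => hnn x y x' b').mp h3 y' (mem_univ y')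
  have habs : |ωX s x x' - ωY s y y'| ^ p = 0 := by
    rcases mul_eq_zero.mp hterm with h | h
    · exact h
    · exact absurd h (ne_of_gt (mul_pos hxy hx'y'))
  have := (Real.rpow_eq_zero (abs_nonneg _) (ne_of_gt hp0)).mp habs
  have := abs_eq_zero.mp this
  linarith [sub_eq_zero.mp this]
end
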